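/- arXiv:1003.3591 — 7 statements merged into one kernel-verified Lean document; each statement's English description precedes it below -/
import Mathlib

section
/- For every d ≥ 2 and every SIC POVM ψ_1, …, ψ_{d²} in ℂ^d, the group of all determinant-1 unitary operators on ℂ^d that leave the SIC POVM invariant is finite. -/
noncomputable section

open Complex Matrix

/-- The standard Hermitian inner product on `ℂ^d`, conjugate-linear in the first argument. -/
def inn {d : ℕ} (x y : Fin d → ℂ) : ℂ := ∑ i, (starRingEnd ℂ) (x i) * y i

/-- A SIC POVM in dimension `d`: `d²` unit vectors with pairwise squared overlap `1/(d+1)`. -/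
def IsSIC {d : ℕ} (ψ : Fin (d ^ 2) → (Fin d → ℂ)) : Prop :=
  (∀ j, inn (ψ j) (ψ j) = 1) ∧
    ∀ j k, j ≠ k → ‖inn (ψ j) (ψ k)‖ ^ 2 = 1 / (d + 1)

/-- A single operator `U` leaves the SIC POVM `ψ` invariant: it permutes the vectors up to
modulus-one phase factors. -/
def LeavesInvariant {d : ℕ} (U : Matrix (Fin d) (Fin d) ℂ)
    (ψ : Fin (d ^ 2) → (Fin d → ℂ)) : Prop :=
  ∀ j, ∃ k, ∃ c : ℂ, ‖c‖ = 1 ∧ U.mulVec (ψ j) = c • ψ k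

/-- The SIC POVM `ψ` is covariant with respect to the set of operators `G`: every element of `G`
leaves it invariant, and `G` acts transitively on the vectors (up to phases). -/
def CovariantWith {d : ℕ} (G : Set (Matrix (Fin d) (Fin d) ℂ))
    (ψ : Fin (d ^ 2) → (Fin d → ℂ)) : Prop :=
  (∀ U ∈ G, LeavesInvariant U ψ) ∧
    ∀ j k, ∃ U ∈ G, ∃ c : ℂ, ‖c‖ = 1 ∧ U.mulVec (ψ j) = c • ψ k

/-- The set of matrices underlying a subgroup of the unitary group. -/
def matSet {d : ℕ} (G : Subgroup (Matrix.unitaryGroup (Fin d) ℂ)) :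
    Set (Matrix (Fin d) (Fin d) ℂ) :=
  (fun U : Matrix.unitaryGroup (Fin d) ℂ => (U : Matrix (Fin d) (Fin d) ℂ)) '' G

lemma inn_eq {d : ℕ} (x y : Fin d → ℂ) : inn x y = star x ⬝ᵥ y := rfl

lemma inn_mulVec {d : ℕ} {U : Matrix (Fin d) (Fin d) ℂ} (hU : star U * U = 1)
    (x y : Fin d → ℂ) : inn (U.mulVec x) (U.mulVec y) = inn x y := by
  rw [inn_eq, inn_eq, star_mulVec, ← dotProduct_mulVec, mulVec_mulVec]
  rw [show Uᴴ = star U from rfl, hU, one_mulVec]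

lemma inn_smul {d : ℕ} (c e : ℂ) (x y : Fin d → ℂ) :
    inn (c • x) (e • y) = (starRingEnd ℂ) c * e * inn x y := by
  simp [inn, Finset.mul_sum, mul_comm, mul_assoc, mul_left_comm]

lemma sum_mulVec' {d n : ℕ} (f : Fin n → Matrix (Fin d) (Fin d) ℂ) (v : Fin d → ℂ) :
    (∑ j, f j).mulVec v = ∑ j, (f j).mulVec v := by
  funext a
  simp only [Matrix.mulVec, dotProduct, Matrix.sum_apply, Finset.sum_mul, Finset.sum_apply]
  exact Finset.sum_comm

lemma inn_conj {d : ℕ} (x y : Fin d → ℂ) : inn y x = (starRingEnd ℂ) (inn x y) := by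
  simp [inn, map_sum, mul_comm]

lemma inn_smul_right {d : ℕ} (c : ℂ) (x y : Fin d → ℂ) :
    inn x (c • y) = c * inn x y := by
  simp [inn, Finset.mul_sum, mul_left_comm]

lemma inn_sum_right {d n : ℕ} (x : Fin d → ℂ) (f : Fin n → (Fin d → ℂ)) :
    inn x (∑ j, f j) = ∑ j, inn x (f j) := by
  simp [inn, Finset.mul_sum]
  exact Finset.sum_comm

lemma P_mulVec {d : ℕ} (u v : Fin d → ℂ) :
    (vecMulVec u (star u)).mulVec v = (inn u v) • u := by
  funext a
  simp only [mulVec, vecMulVec_apply, dotProduct, inn, Pi.smul_apply, smul_eq_mul,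
    Finset.sum_mul, Pi.star_apply]
  refine Finset.sum_congr rfl fun i _ => ?_
  rw [starRingEnd_apply]; ring

lemma key {d : ℕ} (hd : d ≠ 0) (ψ : Fin (d ^ 2) → (Fin d → ℂ)) (hSIC : IsSIC ψ) :
    ∃ c : Fin (d ^ 2) → ℂ,
      (1 : Matrix (Fin d) (Fin d) ℂ) = ∑ j, c j • vecMulVec (ψ j) (star (ψ j)) := by
  set P : Fin (d ^ 2) → Matrix (Fin d) (Fin d) ℂ :=
    fun j => vecMulVec (ψ j) (star (ψ j)) with hP
  have hD : ((d : ℂ) + 1) ≠ 0 := by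
    have : ((d + 1 : ℕ) : ℂ) ≠ 0 := Nat.cast_ne_zero.2 (Nat.succ_ne_zero d)
    push_cast at this; exact this
  have hdC : (d : ℂ) ≠ 0 := Nat.cast_ne_zero.2 hd
  set r : ℂ := ((d : ℂ) + 1)⁻¹ with hr
  have hval : ∀ j k, inn (ψ j) (ψ k) * inn (ψ k) (ψ j) = if j = k then 1 else r := by
    intro j k
    by_cases h : j = k
    · subst h; simp [hSIC.1 j]
    · rw [if_neg h, inn_conj (ψ j) (ψ k), Complex.mul_conj, ← Complex.sq_norm,
        hSIC.2 j k h, hr]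
      push_cast
      rw [one_div]
  have li : LinearIndependent ℂ P := by
    rw [Fintype.linearIndependent_iff]
    intro g hg
    set s : ℂ := ∑ j, g j with hs
    have h0 : ∀ k, (1 - r) * g k + r * s = 0 := by
      intro k
      have h1 : inn (ψ k) ((∑ j, g j • P j).mulVec (ψ k)) = 0 := by rw [hg]; simp [inn]
      have h2 : (∑ j, g j • P j).mulVec (ψ k) = ∑ j, (g j * inn (ψ j) (ψ k)) • ψ j := by
        rw [sum_mulVec']
        refine Finset.sum_congr rfl fun j _ => ?_
        rw [Matrix.smul_mulVec, hP, P_mulVec, smul_smul]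
      rw [h2, inn_sum_right] at h1
      have h3 : ∀ j, inn (ψ k) ((g j * inn (ψ j) (ψ k)) • ψ j)
          = g j * (if j = k then 1 else r) := by
        intro j
        rw [inn_smul_right, ← hval j k]; ring
      rw [Finset.sum_congr rfl fun j _ => h3 j] at h1
      have h4 : ∑ j, g j * (if j = k then 1 else r)
          = (1 - r) * g k + r * s := by
        have : ∀ j, g j * (if j = k then 1 else r)
            = (if j = k then (1 - r) * g j else 0) + r * g j := by
          intro j; by_cases h : j = k <;> simp [h] <;> ring
        rw [Finset.sum_congr rfl fun j _ => this j, Finset.sum_add_distrib,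
          Finset.sum_ite_eq' Finset.univ k (fun j => (1 - r) * g j)]
        simp [hs, Finset.mul_sum]
      rw [h4] at h1; exact h1
    have hsum : ((1 - r) + (d ^ 2 : ℕ) * r) * s = 0 := by
      have := Finset.sum_congr rfl (fun k (_ : k ∈ Finset.univ) => h0 k)
      rw [Finset.sum_const_zero, Finset.sum_add_distrib, ← Finset.mul_sum, ← hs,
        Finset.sum_const, Finset.card_univ, Fintype.card_fin] at this
      push_cast at this ⊢
      linear_combination this
    have hcoef : ((1 - r) + (d ^ 2 : ℕ) * r) = (d : ℂ) := by
      rw [hr]; push_cast; field_simp; ring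
    have hs0 : s = 0 := by
      rw [hcoef] at hsum
      exact (mul_eq_zero.1 hsum).resolve_left hdC
    intro k
    have := h0 k
    rw [hs0, mul_zero, add_zero] at this
    have h1r : (1 - r) ≠ 0 := by
      intro h
      have hr1 : r = 1 := by linear_combination -h
      rw [hr, inv_eq_one] at hr1
      exact hdC (by linear_combination hr1)
    exact (mul_eq_zero.1 this).resolve_left h1r
  have hcard : Fintype.card (Fin (d ^ 2)) = Module.finrank ℂ (Matrix (Fin d) (Fin d) ℂ) := by
    simp [Module.finrank_matrix]
    ring
  haveI : Nonempty (Fin (d ^ 2)) := ⟨⟨0, by positivity⟩⟩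
  let B := basisOfLinearIndependentOfCardEqFinrank li hcard
  refine ⟨B.repr 1, ?_⟩
  have hB : ∀ j, B j = P j := fun j => by
    rw [show B = basisOfLinearIndependentOfCardEqFinrank li hcard from rfl,
      coe_basisOfLinearIndependentOfCardEqFinrank]
  calc (1 : Matrix (Fin d) (Fin d) ℂ) = ∑ j, B.repr 1 j • B j := (B.sum_repr 1).symm
    _ = ∑ j, B.repr 1 j • P j := Finset.sum_congr rfl fun j _ => by rw [hB]

lemma mul_vecMulVec (M : Matrix (Fin d) (Fin d) ℂ) (u v : Fin d → ℂ) :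
    M * vecMulVec u v = vecMulVec (M.mulVec u) v := by
  ext a b
  simp only [Matrix.mul_apply, vecMulVec_apply, mulVec, dotProduct, Finset.sum_mul]
  exact Finset.sum_congr rfl fun i _ => by ring

lemma matrix_ext_of_one_eq_sum {n : ℕ} (ψ : Fin n → (Fin d → ℂ)) (c : Fin n → ℂ)
    (hc : (1 : Matrix (Fin d) (Fin d) ℂ) = ∑ j, c j • vecMulVec (ψ j) (star (ψ j)))
    (A B : Matrix (Fin d) (Fin d) ℂ) (h : ∀ j, A.mulVec (ψ j) = B.mulVec (ψ j)) : A = B := by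
  calc A = A * 1 := (mul_one A).symm
    _ = ∑ j, c j • (A * vecMulVec (ψ j) (star (ψ j))) := by
        rw [hc, Finset.mul_sum]
        exact Finset.sum_congr rfl fun j _ => (mul_smul_comm _ _ _)
    _ = ∑ j, c j • (B * vecMulVec (ψ j) (star (ψ j))) := by
        refine Finset.sum_congr rfl fun j _ => ?_
        rw [mul_vecMulVec, mul_vecMulVec, h j]
    _ = B * 1 := by
        rw [hc, Finset.mul_sum]
        exact (Finset.sum_congr rfl fun j _ => (mul_smul_comm _ _ _)).symm
    _ = B := mul_one B

lemma roots_finite (hd : 0 < d) : {e : ℂ | e ^ d = 1}.Finite := by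
  refine Set.Finite.subset (Polynomial.nthRoots d (1 : ℂ)).toFinset.finite_toSet ?_
  intro e he
  simp only [Finset.mem_coe, Multiset.mem_toFinset]
  rw [Polynomial.mem_nthRoots hd]
  exact he

/-- For every `d ≥ 2` and every SIC POVM in `ℂ^d`, the group of
determinant-one unitary operators leaving the SIC POVM invariant is finite. -/
theorem sic_symmetry_group_finite (d : ℕ) (hd : 2 ≤ d)
    (ψ : Fin (d ^ 2) → (Fin d → ℂ)) (hSIC : IsSIC ψ) :
    {U : Matrix (Fin d) (Fin d) ℂ |
      U ∈ Matrix.unitaryGroup (Fin d) ℂ ∧ U.det = 1 ∧ LeavesInvariant U ψ}.Finite := by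
  have hd0 : d ≠ 0 := by omega
  obtain ⟨c₀, hc₀⟩ := key hd0 ψ hSIC
  have hinn : ∀ j k, inn (ψ j) (ψ k) ≠ 0 := by
    intro j k
    by_cases h : j = k
    · subst h; rw [hSIC.1 j]; exact one_ne_zero
    · intro h0
      have h1 := hSIC.2 j k h
      rw [h0, norm_zero] at h1
      have h2 : (0 : ℝ) < 1 / ((d : ℝ) + 1) := by positivity
      rw [← h1] at h2
      norm_num at h2
  have fib : ∀ (σ : Fin (d ^ 2) → Fin (d ^ 2)) (U U' : Matrix (Fin d) (Fin d) ℂ),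
      U ∈ Matrix.unitaryGroup (Fin d) ℂ → U.det = 1 →
      U' ∈ Matrix.unitaryGroup (Fin d) ℂ → U'.det = 1 →
      (∀ j, ∃ c : ℂ, ‖c‖ = 1 ∧ U.mulVec (ψ j) = c • ψ (σ j)) →
      (∀ j, ∃ c : ℂ, ‖c‖ = 1 ∧ U'.mulVec (ψ j) = c • ψ (σ j)) →
      ∃ e : ℂ, e ^ d = 1 ∧ U' = e • U := by
    intro σ U U' hU hUdet hU' hU'det h h'
    choose c hc1 hc2 using h
    choose c' hc'1 hc'2 using h'
    have hcne : ∀ j, c j ≠ 0 := by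
      intro j h0
      have := hc1 j
      rw [h0, norm_zero] at this
      exact zero_ne_one this
    set e : Fin (d ^ 2) → ℂ := fun j => c' j / c j with he
    have hmv : ∀ j, U'.mulVec (ψ j) = e j • U.mulVec (ψ j) := by
      intro j
      rw [hc'2 j, hc2 j, smul_smul]
      congr 1
      rw [he]
      rw [div_mul_eq_mul_div, mul_div_assoc, div_self (hcne j), mul_one]
    have habs : ∀ j, ‖e j‖ = 1 := by
      intro j
      rw [he]
      simp only [norm_div, hc'1, hc1, div_one]
    have hpair : ∀ j k, e k = e j := by
      intro j k
      have h1 : inn (U'.mulVec (ψ j)) (U'.mulVec (ψ k)) = inn (ψ j) (ψ k) :=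
        inn_mulVec (Unitary.mem_iff.mp hU').1 _ _
      have h2 : inn (U.mulVec (ψ j)) (U.mulVec (ψ k)) = inn (ψ j) (ψ k) :=
        inn_mulVec (Unitary.mem_iff.mp hU).1 _ _
      rw [hmv j, hmv k, inn_smul, h2] at h1
      have hee : (starRingEnd ℂ) (e j) * e k = 1 :=
        mul_right_cancel₀ (hinn j k) (by rw [one_mul]; linear_combination h1)
      have hjj : (starRingEnd ℂ) (e j) * e j = 1 := by
        rw [mul_comm, Complex.mul_conj, ← Complex.sq_norm, habs j]
        norm_num
      exact mul_left_cancel₀ (left_ne_zero_of_mul_eq_one hee) (hee.trans hjj.symm)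
    have hpos : 0 < d ^ 2 := pow_pos (by omega) 2
    set j₀ : Fin (d ^ 2) := ⟨0, hpos⟩ with hj₀
    have hU'eq : U' = e j₀ • U := by
      refine matrix_ext_of_one_eq_sum ψ c₀ hc₀ U' (e j₀ • U) fun j => ?_
      rw [hmv j, hpair j₀ j, Matrix.smul_mulVec]
    refine ⟨e j₀, ?_, hU'eq⟩
    have hdet := hU'det
    rw [hU'eq, Matrix.det_smul, hUdet, mul_one, Fintype.card_fin] at hdet
    exact hdet
  have hTfin : ∀ σ : Fin (d ^ 2) → Fin (d ^ 2),
      Set.Finite {U : Matrix (Fin d) (Fin d) ℂ | U ∈ Matrix.unitaryGroup (Fin d) ℂ ∧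
        U.det = 1 ∧ ∀ j, ∃ c : ℂ, ‖c‖ = 1 ∧ U.mulVec (ψ j) = c • ψ (σ j)} := by
    intro σ
    rcases Set.eq_empty_or_nonempty {U : Matrix (Fin d) (Fin d) ℂ |
        U ∈ Matrix.unitaryGroup (Fin d) ℂ ∧
        U.det = 1 ∧ ∀ j, ∃ c : ℂ, ‖c‖ = 1 ∧ U.mulVec (ψ j) = c • ψ (σ j)} with
      hemp | ⟨U₀, hU₀⟩
    · rw [hemp]; exact Set.finite_empty
    · refine Set.Finite.subset (Set.Finite.image (fun e : ℂ => e • U₀)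
        (roots_finite (d := d) (by omega))) ?_
      intro U hU
      obtain ⟨e, he1, he2⟩ := fib σ U₀ U hU₀.1 hU₀.2.1 hU.1 hU.2.1 hU₀.2.2 hU.2.2
      exact ⟨e, he1, he2.symm⟩
  refine Set.Finite.subset (Set.finite_iUnion hTfin) ?_
  intro U hU
  rw [Set.mem_iUnion]
  exact ⟨fun j => (hU.2.2 j).choose, hU.1, hU.2.1, fun j => (hU.2.2 j).choose_spec⟩
end
end

section
/- Let d ≥ 2 and let u_1, …, u_d be complex roots of unity. Then |u_1 + u_2 + ⋯ + u_d|² ≠ d²/(d+1). -/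
noncomputable section

open Complex

lemma isIntegral_of_rootOfUnity (z : ℂ) (n : ℕ) (hn : 0 < n) (h : z ^ n = 1) :
    IsIntegral ℤ z := by
  refine ⟨Polynomial.X ^ n - Polynomial.C 1, Polynomial.monic_X_pow_sub_C 1 hn.ne', ?_⟩
  simp [Polynomial.eval₂_sub, h]

/-- For `d ≥ 2`, a sum of `d` complex roots of unity never has squared
modulus `d²/(d+1)` (a sum of roots of unity is an algebraic integer, whereas `d²/(d+1)` is a
non-integral rational). -/
theorem sum_roots_of_unity_sq_ne (d : ℕ) (hd : 2 ≤ d) (u : Fin d → ℂ)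
    (hu : ∀ i, ∃ n : ℕ, 0 < n ∧ u i ^ n = 1) :
    ‖∑ i, u i‖ ^ 2 ≠ (d : ℝ) ^ 2 / ((d : ℝ) + 1) := by
  intro h
  set S : ℂ := ∑ i, u i with hSdef
  have hS : IsIntegral ℤ S := by
    refine IsIntegral.sum _ (fun i _ => ?_)
    obtain ⟨n, hn, hun⟩ := hu i
    exact isIntegral_of_rootOfUnity _ n hn hun
  have hSc : IsIntegral ℤ ((starRingEnd ℂ) S) :=
    hS.map ((starRingEnd ℂ).toIntAlgHom)
  have hmul : IsIntegral ℤ (S * (starRingEnd ℂ) S) := hS.mul hSc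
  have hq : S * (starRingEnd ℂ) S = ((((d : ℚ) ^ 2 / ((d : ℚ) + 1)) : ℚ) : ℂ) := by
    rw [Complex.mul_conj]
    rw [← Complex.sq_norm, h]
    push_cast
    ring
  rw [hq] at hmul
  have hint : IsIntegral ℤ (((d : ℚ) ^ 2 / ((d : ℚ) + 1)) : ℚ) := by
    have := (isIntegral_algHom_iff ((Rat.castHom ℂ).toIntAlgHom)
      (by simpa using Rat.cast_injective (α := ℂ))).mp hmul
    exact this
  obtain ⟨n, hn⟩ := IsIntegrallyClosed.isIntegral_iff.mp hint
  have hd1 : ((d : ℚ) + 1) ≠ 0 := by positivity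
  have key : (d : ℚ) ^ 2 = n * ((d : ℚ) + 1) := by
    field_simp at hn
    simp only [algebraMap_int_eq, eq_intCast] at hn
    linarith [hn]
  have hz : (d : ℤ) ^ 2 = n * ((d : ℤ) + 1) := by exact_mod_cast key
  have hdvd : ((d : ℤ) + 1) ∣ 1 := by
    have h1 : ((d : ℤ) + 1) ∣ (d : ℤ) ^ 2 := ⟨n, by linarith [hz]⟩
    have h2 : ((d : ℤ) + 1) ∣ ((d : ℤ) + 1) * ((d : ℤ) - 1) := Dvd.intro _ rfl
    have h3 := dvd_sub h1 h2
    have h4 : (d : ℤ) ^ 2 - ((d : ℤ) + 1) * ((d : ℤ) - 1) = 1 := by ring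
    rwa [h4] at h3
  have : ((d : ℤ) + 1) ≤ 1 := Int.le_of_dvd one_pos hdvd
  have : (2 : ℤ) ≤ (d : ℤ) := by exact_mod_cast hd
  omega
end
end

section
/- Let ω = e^{2πi/3}, let Z be the diagonal 3×3 unitary with Z e_r = ω^r e_r and X the cyclic shift with X e_r = e_{r+1 (mod 3)}, for t ∈ ℝ let ψ_f(t) = (0, 1, −e^{it})/√2 ∈ ℂ³, and let W = diag(1, e^{2πi/9}, e^{4πi/9}). Then for every t ∈ ℝ and all a, b ∈ {0,1,2} there exist a', b' ∈ {0,1,2} and a complex number c of modulus 1 with W Z^b X^a ψ_f(t) = c Z^{b'} X^{a'} ψ_f(t + 2π/9). Consequently, W maps the set of nine lines {ℂ Z^b X^a ψ_f(t)} bijectively onto {ℂ Z^b X^a ψ_f(t + 2π/9)}, so the SIC POVMs generated from ψ_f(t) and from ψ_f(t + 2π/9) are unitarily equivalent. -/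
noncomputable section

open Complex Matrix

/-- The cyclic-shift unitary `X`, `X e_r = e_{r+1 (mod p)}`. -/
def Xmat (p : ℕ) [NeZero p] : Matrix (Fin p) (Fin p) ℂ :=
  Matrix.of fun r s => if r = s + 1 then 1 else 0

/-- The diagonal unitary `Z`, `Z e_r = ω^r e_r` with `ω = exp(2πi/p)`. -/
def Zmat (p : ℕ) : Matrix (Fin p) (Fin p) ℂ :=
  Matrix.diagonal fun r => Complex.exp (2 * (Real.pi : ℂ) * Complex.I * ((r : ℕ) : ℂ) / (p : ℂ))

/-- The standard Heisenberg–Weyl group: the (sub)group of `U(p)` generated by `X` and `Z`,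
regarded as a set of matrices.  (Since `X` and `Z` have finite order, the multiplicative
closure coincides with the generated group.) -/
def HW (p : ℕ) [NeZero p] : Set (Matrix (Fin p) (Fin p) ℂ) :=
  (Submonoid.closure {Xmat p, Zmat p} : Submonoid (Matrix (Fin p) (Fin p) ℂ))

/-- Conjugation `W G W⁻¹` of a set of matrices by a unitary `W` (so `W⁻¹ = star W`). -/
def conjSet {d : ℕ} (W : Matrix (Fin d) (Fin d) ℂ)
    (G : Set (Matrix (Fin d) (Fin d) ℂ)) : Set (Matrix (Fin d) (Fin d) ℂ) :=
  (fun A => W * A * star W) '' G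

/-- The one-parameter family of fiducial vectors `ψ_f(t) = (0, 1, −e^{it})/√2` in `ℂ³`. -/
def ψf (t : ℝ) : Fin 3 → ℂ :=
  ![0, 1 / (Real.sqrt 2 : ℂ), -Complex.exp (Complex.I * (t : ℂ)) / (Real.sqrt 2 : ℂ)]

/-- The vector `Z^b X^a ψ_f(t)` of the Heisenberg–Weyl orbit of `ψ_f(t)`. -/
def sicVec (t : ℝ) (a b : Fin 3) : Fin 3 → ℂ :=
  ((Zmat 3) ^ (b : ℕ) * (Xmat 3) ^ (a : ℕ)).mulVec (ψf t)

/-- The complex line spanned by a vector. -/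
def lineOf (v : Fin 3 → ℂ) : Set (Fin 3 → ℂ) := {w | ∃ c : ℂ, w = c • v}

/-- The nine lines of the SIC POVM generated from `ψ_f(t)`. -/
def sicLines (t : ℝ) : Set (Set (Fin 3 → ℂ)) :=
  {l | ∃ a b : Fin 3, l = lineOf (sicVec t a b)}

/-- The unitary `W = diag(1, e^{2πi/9}, e^{4πi/9})`. -/
def Wmat : Matrix (Fin 3) (Fin 3) ℂ :=
  Matrix.diagonal fun r =>
    Complex.exp (2 * (Real.pi : ℂ) * Complex.I * ((r : ℕ) : ℂ) / 9)


lemma Zmat3 : Zmat 3 = !![1,0,0; 0, Complex.exp (2*(Real.pi:ℂ)*Complex.I/3), 0;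
    0,0, Complex.exp (2*(Real.pi:ℂ)*Complex.I*2/3)] := by
  ext i j
  fin_cases i <;> fin_cases j <;>
    simp [Zmat, Matrix.diagonal, Matrix.vecHead, Matrix.vecTail]

lemma Xmat3 : Xmat 3 = !![0,0,1; 1,0,0; 0,1,0] := by
  ext i j
  fin_cases i <;> fin_cases j <;> simp [Xmat, Matrix.vecHead, Matrix.vecTail]

lemma Xpow2 : (!![0,0,1; 1,0,0; 0,1,0] : Matrix (Fin 3) (Fin 3) ℂ)^(2:ℕ) = !![0,1,0; 0,0,1; 1,0,0] := by
  rw [pow_two]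
  norm_num [Matrix.mul_fin_three]

lemma Zpow2 : (!![1,0,0; 0, Complex.exp (2*(Real.pi:ℂ)*Complex.I/3), 0;
    0,0, Complex.exp (2*(Real.pi:ℂ)*Complex.I*2/3)] : Matrix (Fin 3) (Fin 3) ℂ)^(2:ℕ) =
    !![1,0,0; 0, Complex.exp (2*(Real.pi:ℂ)*Complex.I*2/3), 0;
    0,0, Complex.exp (2*(Real.pi:ℂ)*Complex.I*2/3) * Complex.exp (2*(Real.pi:ℂ)*Complex.I*2/3)] := by
  rw [pow_two]
  norm_num [Matrix.mul_fin_three]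
  rw [← Complex.exp_add]; ring_nf

/-- The phase factor picked up by `W` on the vector `Z^b X^a ψ_f(t)`. -/
def sicPhase (a : Fin 3) : ℂ :=
  if a = 1 then Complex.exp (2*(Real.pi:ℂ)*Complex.I*8/9)
    else if a = 2 then 1 else Complex.exp (2*(Real.pi:ℂ)*Complex.I/9)

lemma abs_sicPhase (a : Fin 3) : ‖sicPhase a‖ = 1 := by
  unfold sicPhase
  split_ifs
  · rw [show (2*(Real.pi:ℂ)*Complex.I*8/9) = ((2*Real.pi*8/9 : ℝ):ℂ)*Complex.I by push_cast; ring,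
      Complex.norm_exp_ofReal_mul_I]
  · simp
  · rw [show (2*(Real.pi:ℂ)*Complex.I/9) = ((2*Real.pi/9 : ℝ):ℂ)*Complex.I by push_cast; ring,
      Complex.norm_exp_ofReal_mul_I]

lemma sicPhase_ne_zero (a : Fin 3) : sicPhase a ≠ 0 := by
  unfold sicPhase
  split_ifs <;> simp [Complex.exp_ne_zero]

set_option maxHeartbeats 1000000 in
lemma keyvec (t : ℝ) (a b : Fin 3) :
    Wmat.mulVec (sicVec t a b) =
      sicPhase a • sicVec (t + 2*Real.pi/9) a (if a = 1 then b + 2 else b) := by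
  unfold sicPhase
  fin_cases a <;> fin_cases b <;> (funext i; fin_cases i) <;>
    simp [Wmat, sicVec, Zmat3, Xmat3, Xpow2, Zpow2, ψf, Matrix.mulVec, Matrix.mul_apply,
      Fin.sum_univ_three, Matrix.diagonal, dotProduct, Matrix.vecHead, Matrix.vecTail] <;>
    (try field_simp) <;> (try ring_nf) <;>
    (try simp only [← Complex.exp_nat_mul, ← Complex.exp_add, neg_inj]) <;>
    (try rw [Complex.exp_eq_exp_iff_exists_int]) <;>
    (first
       | (refine ⟨0, ?_⟩; push_cast; ring1)
       | (refine ⟨1, ?_⟩; push_cast; ring1)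
       | (refine ⟨-1, ?_⟩; push_cast; ring1)
       | (refine ⟨2, ?_⟩; push_cast; ring1)
       | (refine ⟨-2, ?_⟩; push_cast; ring1))

lemma image_lineOf (M : Matrix (Fin 3) (Fin 3) ℂ) (v : Fin 3 → ℂ) :
    M.mulVec '' lineOf v = lineOf (M.mulVec v) := by
  ext w
  constructor
  · rintro ⟨u, ⟨c, rfl⟩, rfl⟩
    exact ⟨c, M.mulVec_smul c v⟩
  · rintro ⟨c, rfl⟩
    exact ⟨c • v, ⟨c, rfl⟩, M.mulVec_smul c v⟩

lemma lineOf_smul (c : ℂ) (hc : c ≠ 0) (v : Fin 3 → ℂ) : lineOf (c • v) = lineOf v := by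
  ext w
  constructor
  · rintro ⟨d, rfl⟩
    exact ⟨d * c, smul_smul d c v⟩
  · rintro ⟨d, rfl⟩
    exact ⟨d * c⁻¹, by rw [smul_smul, mul_assoc, inv_mul_cancel₀ hc, mul_one]⟩


/-- The unitary `W = diag(1, e^{2πi/9}, e^{4πi/9})` maps each vector
`Z^b X^a ψ_f(t)` to a phase times some `Z^{b'} X^{a'} ψ_f(t + 2π/9)`, and hence maps the set
of nine lines of the SIC POVM of `ψ_f(t)` bijectively onto that of `ψ_f(t + 2π/9)`: the two
SIC POVMs are unitarily equivalent. -/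
theorem dim3_shift_by_two_pi_ninth_equivalence (t : ℝ) :
    (∀ a b : Fin 3, ∃ a' b' : Fin 3, ∃ c : ℂ, ‖c‖ = 1 ∧
      Wmat.mulVec (sicVec t a b) = c • sicVec (t + 2 * Real.pi / 9) a' b') ∧
    (fun l => Wmat.mulVec '' l) '' sicLines t = sicLines (t + 2 * Real.pi / 9) := by
  constructor
  · intro a b
    exact ⟨a, if a = 1 then b + 2 else b, sicPhase a, abs_sicPhase a, keyvec t a b⟩
  · ext l
    simp only [sicLines, Set.mem_image, Set.mem_setOf_eq]
    constructor
    · rintro ⟨l0, ⟨a, b, rfl⟩, rfl⟩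
      refine ⟨a, if a = 1 then b + 2 else b, ?_⟩
      rw [image_lineOf, keyvec, lineOf_smul _ (sicPhase_ne_zero a)]
    · rintro ⟨a, b, rfl⟩
      refine ⟨lineOf (sicVec t a (if a = 1 then b + 1 else b)), ⟨a, _, rfl⟩, ?_⟩
      rw [image_lineOf, keyvec, lineOf_smul _ (sicPhase_ne_zero a)]
      congr 1
      split_ifs with h
      · simp [h, add_assoc]
      · rfl
end
end

section
/- Let p ≥ 5 be a prime, let τ = −e^{iπ/p}, and let X, Z be the p×p unitaries with Z e_r = ω^r e_r (ω = e^{2πi/p}) and X e_r = e_{r+1 (mod p)}. Define the diagonal unitaries V = diag(τ^{0²}, τ^{1²}, …, τ^{(p−1)²}) and U = diag(τ^{σ_0}, τ^{σ_1}, …, τ^{σ_{p−1}}) where σ_s = 1² + 2² + ⋯ + s² (σ_0 = 0). Then det V = 1, U Z U* = Z, and U X U* = V X; consequently U^j X U*^j = V^j X for all j = 0, …, p−1, so conjugation by U maps the subgroup ⟨Z, X⟩ of U(p) onto ⟨Z, V X⟩. -/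
noncomputable section

open Complex Matrix

/-- `τ = −e^{iπ/p}`. -/
def τc (p : ℕ) : ℂ := -Complex.exp ((Real.pi : ℂ) * Complex.I / (p : ℂ))

/-- The diagonal unitary `V = diag(τ^{0²}, τ^{1²}, …, τ^{(p−1)²})`. -/
def Vmat (p : ℕ) : Matrix (Fin p) (Fin p) ℂ :=
  Matrix.diagonal fun r => τc p ^ ((r : ℕ) ^ 2)

/-- `σ_s = 1² + 2² + ⋯ + s²` (with `σ_0 = 0`). -/
def σsum (s : ℕ) : ℕ := ∑ k ∈ Finset.range (s + 1), k ^ 2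

/-- The diagonal unitary `U = diag(τ^{σ_0}, τ^{σ_1}, …, τ^{σ_{p−1}})`. -/
def Umat (p : ℕ) : Matrix (Fin p) (Fin p) ℂ :=
  Matrix.diagonal fun r => τc p ^ σsum (r : ℕ)

lemma tau_mul_conj (p : ℕ) : τc p * star (τc p) = 1 := by
  show τc p * (starRingEnd ℂ) (τc p) = 1
  unfold τc
  rw [map_neg, ← Complex.exp_conj, neg_mul_neg, ← Complex.exp_add,
    map_div₀, _root_.map_mul, Complex.conj_ofReal, Complex.conj_I, map_natCast]
  rw [show (Real.pi:ℂ) * Complex.I / (p:ℂ) + (Real.pi:ℂ) * (-Complex.I) / (p:ℂ) = 0 by ring]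
  exact Complex.exp_zero

lemma tau_pow_mul_conj (p n : ℕ) : τc p ^ n * star (τc p ^ n) = 1 := by
  rw [star_pow, ← mul_pow, tau_mul_conj, one_pow]

lemma tau_pow_p (p : ℕ) (hodd : Odd p) (hp0 : p ≠ 0) : τc p ^ p = 1 := by
  unfold τc
  have hc : (p:ℂ) ≠ 0 := Nat.cast_ne_zero.mpr hp0
  rw [neg_pow, ← Complex.exp_nat_mul, hodd.neg_one_pow]
  rw [show (p:ℂ) * ((Real.pi:ℂ) * Complex.I / (p:ℂ)) = (Real.pi:ℂ) * Complex.I by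
    field_simp]
  rw [Complex.exp_pi_mul_I]
  ring

lemma six_mul_σsum (n : ℕ) : 6 * σsum n = n * (n + 1) * (2 * n + 1) := by
  induction n with
  | zero => simp [σsum]
  | succ k ih =>
    have h : σsum (k+1) = σsum k + (k+1)^2 := by
      simp [σsum, Finset.sum_range_succ]
    rw [h, Nat.mul_add, ih]; ring

lemma p_dvd_σ (p : ℕ) (hp : p.Prime) (hp5 : 5 ≤ p) : p ∣ σsum (p - 1) := by
  have h : 6 * σsum (p - 1) = (p-1) * p * (2*(p-1)+1) := by
    rw [six_mul_σsum]; congr 2; omega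
  have hpd : p ∣ σsum (p - 1) * 6 := by
    refine ⟨(p-1) * (2*(p-1)+1), ?_⟩
    rw [mul_comm, h]; ring
  have hcop : Nat.Coprime p 6 := hp.coprime_iff_not_dvd.mpr (by
    intro hd
    have h6 := Nat.le_of_dvd (by norm_num) hd
    have h2 := hp.two_le
    interval_cases p <;> revert hd hp <;> decide)
  exact hcop.dvd_of_dvd_mul_right hpd

lemma U_mul_star (p : ℕ) : Umat p * star (Umat p) = 1 := by
  rw [Matrix.star_eq_conjTranspose, Umat, Matrix.diagonal_conjTranspose,
    Matrix.diagonal_mul_diagonal]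
  rw [show (fun i : Fin p => τc p ^ σsum (i:ℕ) * star (fun r : Fin p => τc p ^ σsum (r:ℕ)) i)
      = fun _ => (1:ℂ) from funext fun i => by
        simp only [Pi.star_apply]; exact tau_pow_mul_conj p _]
  exact Matrix.diagonal_one

lemma star_mul_U (p : ℕ) : star (Umat p) * Umat p = 1 := by
  rw [Matrix.star_eq_conjTranspose, Umat, Matrix.diagonal_conjTranspose,
    Matrix.diagonal_mul_diagonal]
  rw [show (fun i : Fin p => star (fun r : Fin p => τc p ^ σsum (r:ℕ)) i * τc p ^ σsum (i:ℕ))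
      = fun _ => (1:ℂ) from funext fun i => by
        simp only [Pi.star_apply]; rw [mul_comm]; exact tau_pow_mul_conj p _]
  exact Matrix.diagonal_one

lemma UZU (p : ℕ) : Umat p * Zmat p * star (Umat p) = Zmat p := by
  rw [Matrix.star_eq_conjTranspose, Umat, Zmat, Matrix.diagonal_conjTranspose,
    Matrix.diagonal_mul_diagonal, Matrix.diagonal_mul_diagonal]
  refine congrArg Matrix.diagonal (funext fun r => ?_)
  simp only [Pi.star_apply]
  rw [mul_right_comm, tau_pow_mul_conj, one_mul]

lemma UXU (p : ℕ) [NeZero p] (hτp : τc p ^ p = 1) (hσ : τc p ^ σsum (p-1) = 1)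
    (hp1 : 1 < p) :
    Umat p * Xmat p * star (Umat p) = Vmat p * Xmat p := by
  have key : ∀ s : Fin p, τc p ^ σsum ((s+1 : Fin p) : ℕ)
      = τc p ^ (((s+1 : Fin p) : ℕ) ^ 2) * τc p ^ σsum (s : ℕ) := by
    intro s
    have hval : ((s+1 : Fin p) : ℕ) = ((s:ℕ) + 1) % p := by
      rw [Fin.val_add, Fin.val_one', Nat.mod_eq_of_lt hp1]
    by_cases hs : (s:ℕ) + 1 < p
    · rw [hval, Nat.mod_eq_of_lt hs]
      rw [show σsum ((s:ℕ)+1) = σsum (s:ℕ) + ((s:ℕ)+1)^2 by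
        simp [σsum, Finset.sum_range_succ], pow_add, mul_comm]
    · have hsp : (s:ℕ) = p - 1 := by have := s.isLt; omega
      have h0 : ((s+1 : Fin p) : ℕ) = 0 := by
        rw [hval, hsp, Nat.sub_add_cancel (by omega)]; exact Nat.mod_self p
      rw [h0, hsp]
      simp [show σsum 0 = 0 from by simp [σsum], hσ]
  ext r s
  rw [Matrix.star_eq_conjTranspose, Umat, Matrix.diagonal_conjTranspose]
  simp only [Matrix.mul_diagonal, Matrix.diagonal_mul, Vmat, Pi.star_apply, Xmat,
    Matrix.of_apply]
  by_cases h : r = s + 1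
  · subst h
    rw [key s]
    simp only [if_pos rfl, if_true, mul_one, one_mul]
    rw [mul_assoc, tau_pow_mul_conj, mul_one]
  · simp [h]

lemma UV_comm (p : ℕ) (k : ℕ) : Umat p * (Vmat p)^k = (Vmat p)^k * Umat p := by
  rw [Umat, Vmat, Matrix.diagonal_pow, Matrix.diagonal_mul_diagonal,
    Matrix.diagonal_mul_diagonal]
  exact congrArg Matrix.diagonal (funext fun i => mul_comm _ _)


/-- For a prime `p ≥ 5`: `det V = 1`, `U Z U* = Z`, `U X U* = V X`, hence
`U^j X U*^j = V^j X` for `j = 0, …, p−1`, and conjugation by `U` maps the group `⟨Z, X⟩` onto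
`⟨Z, V X⟩`. -/
theorem HW_conjugation_by_U (p : ℕ) [NeZero p] (hp : p.Prime) (hp5 : 5 ≤ p) :
    (Vmat p).det = 1 ∧
    Umat p * Zmat p * star (Umat p) = Zmat p ∧
    Umat p * Xmat p * star (Umat p) = Vmat p * Xmat p ∧
    (∀ j : ℕ, j ≤ p - 1 →
      (Umat p) ^ j * Xmat p * (star (Umat p)) ^ j = (Vmat p) ^ j * Xmat p) ∧
    conjSet (Umat p)
        (Submonoid.closure ({Zmat p, Xmat p} : Set (Matrix (Fin p) (Fin p) ℂ)) :
          Submonoid (Matrix (Fin p) (Fin p) ℂ)) =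
      (Submonoid.closure ({Zmat p, Vmat p * Xmat p} : Set (Matrix (Fin p) (Fin p) ℂ)) :
        Submonoid (Matrix (Fin p) (Fin p) ℂ)) := by
  have hodd : Odd p := hp.odd_of_ne_two (by omega)
  have hτp : τc p ^ p = 1 := tau_pow_p p hodd (by omega)
  obtain ⟨m, hm⟩ := p_dvd_σ p hp hp5
  have hσ : τc p ^ σsum (p - 1) = 1 := by rw [hm, pow_mul, hτp, one_pow]
  have hUX : Umat p * Xmat p * star (Umat p) = Vmat p * Xmat p :=
    UXU p hτp hσ (by omega)
  have hdet : (Vmat p).det = 1 := by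
    rw [Vmat, Matrix.det_diagonal, Finset.prod_pow_eq_pow_sum]
    rw [show ∑ r : Fin p, ((r : ℕ)) ^ 2 = σsum (p - 1) by
      rw [Fin.sum_univ_eq_sum_range (fun k => k ^ 2) p, σsum,
        Nat.sub_add_cancel (by omega)]]
    exact hσ
  have hpow : ∀ j : ℕ,
      (Umat p) ^ j * Xmat p * (star (Umat p)) ^ j = (Vmat p) ^ j * Xmat p := by
    intro j
    induction j with
    | zero => simp
    | succ k ih =>
      rw [pow_succ' (Umat p), pow_succ (star (Umat p)), pow_succ (Vmat p)]
      calc Umat p * (Umat p) ^ k * Xmat p * ((star (Umat p)) ^ k * star (Umat p))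
          = Umat p * ((Umat p) ^ k * Xmat p * (star (Umat p)) ^ k) * star (Umat p) := by
            simp only [mul_assoc]
        _ = Umat p * ((Vmat p) ^ k * Xmat p) * star (Umat p) := by rw [ih]
        _ = (Vmat p) ^ k * (Umat p * Xmat p * star (Umat p)) := by
            simp only [← mul_assoc]; rw [UV_comm]
        _ = (Vmat p) ^ k * (Vmat p * Xmat p) := by rw [hUX]
        _ = (Vmat p) ^ k * Vmat p * Xmat p := by rw [mul_assoc]
  have hUsU := U_mul_star p
  have hsUU := star_mul_U p
  refine ⟨hdet, UZU p, hUX, fun j _ => hpow j, ?_⟩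
  set f : Matrix (Fin p) (Fin p) ℂ →* Matrix (Fin p) (Fin p) ℂ :=
    { toFun := fun A => Umat p * A * star (Umat p)
      map_one' := by show Umat p * 1 * star (Umat p) = 1; rw [mul_one, hUsU]
      map_mul' := fun A B => by
        show Umat p * (A * B) * star (Umat p) = _
        rw [show Umat p * A * star (Umat p) * (Umat p * B * star (Umat p))
            = Umat p * (A * ((star (Umat p) * Umat p) * (B * star (Umat p)))) from by
              simp only [mul_assoc], hsUU, one_mul]
        simp only [mul_assoc] } with hf
  have h1 : conjSet (Umat p)
      ↑(Submonoid.closure ({Zmat p, Xmat p} : Set (Matrix (Fin p) (Fin p) ℂ)))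
      = ↑(Submonoid.map f (Submonoid.closure ({Zmat p, Xmat p} :
          Set (Matrix (Fin p) (Fin p) ℂ)))) := by
    rw [Submonoid.coe_map]; rfl
  rw [h1, MonoidHom.map_mclosure]
  rw [Set.image_pair]
  have hfZ : f (Zmat p) = Zmat p := UZU p
  have hfX : f (Xmat p) = Vmat p * Xmat p := hUX
  rw [hfZ, hfX]
end
end

section
/- Let p be an odd prime and let V be a p×p unitary matrix such that V^{p+1} = I and |tr(V^n)| = 1 for every n = 1, …, p. Then the spectrum of V is nondegenerate: V has p pairwise distinct eigenvalues, each eigenvalue is a (p+1)-st root of unity, and every eigenspace of V is one-dimensional. In particular the eigenvalues of V are p of the p+1 distinct (p+1)-st roots of unity. -/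
noncomputable section

open Complex Matrix Polynomial Module DirectSum

-- Auxiliary lemma 1: the structural setup.
section Aux

variable {p : ℕ}

lemma aux_trace_toLin' (A : Matrix (Fin p) (Fin p) ℂ) :
    LinearMap.trace ℂ (Fin p → ℂ) (Matrix.toLin' A) = Matrix.trace A := by
  rw [LinearMap.trace_eq_matrix_trace ℂ (Pi.basisFun ℂ (Fin p)),
    LinearMap.toMatrix_eq_toMatrix', LinearMap.toMatrix'_toLin']

lemma aux_toLin'_pow (A : Matrix (Fin p) (Fin p) ℂ) (n : ℕ) :
    (Matrix.toLin' A) ^ n = Matrix.toLin' (A ^ n) := by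
  induction n with
  | zero => simp [Matrix.toLin'_one]; rfl
  | succ n ih => rw [pow_succ, pow_succ, ih, Matrix.toLin'_mul]; rfl

end Aux



section Aux

variable {p N : ℕ} (f : Module.End ℂ (Fin p → ℂ))

lemma aux_isInternal (hN : N ≠ 0) {ω : ℂ} (hω : IsPrimitiveRoot ω N)
    (hf1 : f ^ N = 1) :
    DirectSum.IsInternal (fun k : Fin N => Module.End.eigenspace f (ω ^ (k : ℕ))) := by
  haveI : NeZero N := ⟨hN⟩
  rw [DirectSum.isInternal_submodule_iff_iSupIndep_and_iSup_eq_top]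
  have hinj : Function.Injective (fun k : Fin N => ω ^ (k : ℕ)) := by
    intro i j hij
    exact Fin.ext (hω.pow_inj i.isLt j.isLt hij)
  constructor
  · exact (Module.End.independent_genEigenspace f 1).comp hinj
  · -- semisimplicity
    have hsq : Squarefree (X ^ N - C (1 : ℂ)) := by
      have hsep : (X ^ N - C (1 : ℂ)).Separable :=
        Polynomial.separable_X_pow_sub_C 1 (by exact_mod_cast Nat.cast_ne_zero.mpr hN) one_ne_zero
      exact hsep.squarefree
    have haev : aeval f (X ^ N - C (1 : ℂ)) = 0 := by
      simp [map_sub, aeval_X_pow, hf1]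
    have hss : f.IsSemisimple :=
      Module.End.isSemisimple_of_squarefree_aeval_eq_zero hsq haev
    have h1 : ⨆ μ : ℂ, f.maxGenEigenspace μ = ⊤ :=
      Module.End.iSup_maxGenEigenspace_eq_top f
    rw [← top_le_iff, ← h1]
    refine iSup_le fun μ0 => ?_
    rw [hss.isFinitelySemisimple.maxGenEigenspace_eq_eigenspace]
    by_cases hbot : Module.End.eigenspace f μ0 = ⊥
    · simp [hbot]
    · have hev : f.HasEigenvalue μ0 := Module.End.hasEigenvalue_iff.mpr hbot
      have hpow : Module.End.HasEigenvalue (f ^ N) (μ0 ^ N) := Module.End.HasEigenvalue.pow hev N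
      rw [hf1] at hpow
      obtain ⟨v, hv⟩ := hpow.exists_hasEigenvector
      have hv1 : v = μ0 ^ N • v := by
        have := Module.End.mem_eigenspace_iff.mp hv.1
        simpa using this
      have hμN : μ0 ^ N = 1 := by
        by_contra h
        have : (μ0 ^ N - 1) • v = 0 := by
          rw [sub_smul, one_smul, ← hv1, sub_self]
        rcases smul_eq_zero.mp this with h' | h'
        · exact h (by linear_combination h')
        · exact hv.2 h'
      obtain ⟨k, hk, hkμ⟩ := hω.eq_pow_of_pow_eq_one hμN
      exact le_iSup_of_le ⟨k, hk⟩ (le_of_eq (by rw [hkμ]))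

lemma aux_pow_apply_eigen {μ : ℂ} (n : ℕ) {x : Fin p → ℂ}
    (hx : x ∈ Module.End.eigenspace f μ) : (f ^ n) x = μ ^ n • x := by
  induction n with
  | zero => simp
  | succ n ih =>
    rw [pow_succ', Module.End.mul_apply, ih, _root_.map_smul,
      Module.End.mem_eigenspace_iff.mp hx, smul_smul, pow_succ]

lemma aux_mapsTo (μ : ℂ) (n : ℕ) :
    Set.MapsTo (⇑(f ^ n)) (Module.End.eigenspace f μ) (Module.End.eigenspace f μ) := by
  intro x hx
  rw [SetLike.mem_coe] at hx ⊢
  rw [aux_pow_apply_eigen f n hx]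
  exact Submodule.smul_mem _ _ hx

lemma aux_trace_restrict (μ : ℂ) (n : ℕ) :
    LinearMap.trace ℂ _ ((f ^ n).restrict (aux_mapsTo f μ n)) =
      μ ^ n * (finrank ℂ (Module.End.eigenspace f μ) : ℂ) := by
  have h : ((f ^ n).restrict (aux_mapsTo f μ n)) = (μ ^ n) • LinearMap.id := by
    refine LinearMap.ext fun x => Subtype.ext ?_
    exact (LinearMap.restrict_coe_apply _ _ x).trans (aux_pow_apply_eigen f n x.2)
  rw [h, _root_.map_smul, LinearMap.trace_id, smul_eq_mul]

lemma aux_trace_formula (hN : N ≠ 0) {ω : ℂ} (hω : IsPrimitiveRoot ω N)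
    (hf1 : f ^ N = 1) (n : ℕ) :
    LinearMap.trace ℂ _ (f ^ n) =
      ∑ k : Fin N, (ω ^ (k : ℕ)) ^ n *
        (finrank ℂ (Module.End.eigenspace f (ω ^ (k : ℕ))) : ℂ) := by
  rw [LinearMap.trace_eq_sum_trace_restrict (aux_isInternal f hN hω hf1)
    (fun k => aux_mapsTo f (ω ^ (k : ℕ)) n)]
  exact Finset.sum_congr rfl fun k _ => aux_trace_restrict f _ n

lemma aux_finrank_sum (hN : N ≠ 0) {ω : ℂ} (hω : IsPrimitiveRoot ω N)
    (hf1 : f ^ N = 1) :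
    ∑ k : Fin N, finrank ℂ (Module.End.eigenspace f (ω ^ (k : ℕ))) = p := by
  have h := aux_isInternal f hN hω hf1
  have e : (⨁ k : Fin N, Module.End.eigenspace f (ω ^ (k : ℕ))) ≃ₗ[ℂ] (Fin p → ℂ) :=
    LinearEquiv.ofBijective (DirectSum.coeLinearMap _) h
  have := e.finrank_eq
  rwa [finrank_directSum, Module.finrank_fin_fun] at this


end Aux



section Aux2

variable {N : ℕ}

lemma aux_geom_sum {z : ℂ} (hz : z ^ N = 1) :
    ∑ n ∈ Finset.range N, z ^ n = if z = 1 then (N : ℂ) else 0 := by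
  split_ifs with h
  · simp [h]
  · rw [geom_sum_eq h, hz, sub_self, zero_div]

lemma aux_conj_mul {ω : ℂ} (hN : N ≠ 0) (hω : ω ^ N = 1) :
    ω * (starRingEnd ℂ) ω = 1 := by
  have h1 : ‖ω‖ = 1 := Complex.norm_eq_one_of_pow_eq_one hω hN
  rw [Complex.mul_conj]
  norm_cast
  rw [Complex.normSq_eq_norm_sq, h1, one_pow]

lemma aux_big_sum (hN : N ≠ 0) {ω : ℂ} (hω : IsPrimitiveRoot ω N) (m : Fin N → ℕ) :
    ∑ n ∈ Finset.range N,
      ((∑ j : Fin N, (ω ^ (j : ℕ)) ^ n * (m j : ℂ)) *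
        (∑ k : Fin N, (((starRingEnd ℂ) ω) ^ (k : ℕ)) ^ n * (m k : ℂ))) =
      (N : ℂ) * ∑ j : Fin N, (m j : ℂ) ^ 2 := by
  have hωN : ω ^ N = 1 := hω.pow_eq_one
  have hconj : ω * (starRingEnd ℂ) ω = 1 := aux_conj_mul hN hωN
  have hω0 : ω ≠ 0 := fun h => by simp [h] at hconj
  have hc : (starRingEnd ℂ) ω = ω⁻¹ := eq_inv_of_mul_eq_one_left (by rw [mul_comm]; exact hconj)
  set z : Fin N → Fin N → ℂ := fun j k => ω ^ (j : ℕ) * ((starRingEnd ℂ) ω) ^ (k : ℕ) with hzdef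
  have hzN : ∀ j k, z j k ^ N = 1 := by
    intro j k
    rw [hzdef]
    simp only [mul_pow, ← pow_mul]
    rw [mul_comm (j : ℕ) N, mul_comm (k : ℕ) N, pow_mul, pow_mul, hωN, ← map_pow, hωN]
    simp
  have hz1 : ∀ j k, z j k = 1 ↔ j = k := by
    intro j k
    rw [hzdef]
    simp only [hc, inv_pow]
    rw [mul_inv_eq_one₀ (pow_ne_zero _ hω0)]
    constructor
    · intro h; exact Fin.ext (hω.pow_inj j.isLt k.isLt h)
    · rintro rfl; rfl
  calc ∑ n ∈ Finset.range N,
      ((∑ j : Fin N, (ω ^ (j : ℕ)) ^ n * (m j : ℂ)) *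
        (∑ k : Fin N, (((starRingEnd ℂ) ω) ^ (k : ℕ)) ^ n * (m k : ℂ)))
      = ∑ n ∈ Finset.range N, ∑ j : Fin N, ∑ k : Fin N,
          ((m j : ℂ) * (m k : ℂ)) * z j k ^ n := by
        refine Finset.sum_congr rfl fun n _ => ?_
        rw [Finset.sum_mul_sum]
        refine Finset.sum_congr rfl fun j _ => Finset.sum_congr rfl fun k _ => ?_
        rw [hzdef]
        simp only [mul_pow]
        ring
    _ = ∑ j : Fin N, ∑ k : Fin N,
          ((m j : ℂ) * (m k : ℂ)) * ∑ n ∈ Finset.range N, z j k ^ n := by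
        rw [Finset.sum_comm]
        refine Finset.sum_congr rfl fun j _ => ?_
        rw [Finset.sum_comm]
        refine Finset.sum_congr rfl fun k _ => ?_
        rw [Finset.mul_sum]
    _ = ∑ j : Fin N, (m j : ℂ) ^ 2 * (N : ℂ) := by
        refine Finset.sum_congr rfl fun j _ => ?_
        rw [Finset.sum_eq_single j]
        · rw [aux_geom_sum (hzN j j), if_pos ((hz1 j j).mpr rfl)]
          ring
        · intro k _ hkj
          rw [aux_geom_sum (hzN j k), if_neg (fun h => hkj ((hz1 j k).mp h).symm), mul_zero]
        · intro h; exact absurd (Finset.mem_univ j) h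
    _ = (N : ℂ) * ∑ j : Fin N, (m j : ℂ) ^ 2 := by
        rw [← Finset.sum_mul, mul_comm]

end Aux2

/-- Let `p` be an odd prime and `V` a `p×p` unitary with `V^{p+1} = 1` and
`|tr(V^n)| = 1` for `n = 1, …, p`.  Then `V` has `p` pairwise distinct eigenvalues, each a
`(p+1)`-st root of unity, these are all the eigenvalues, and every eigenspace of `V` is
one-dimensional. -/
theorem unitary_order_p_plus_one_nondegenerate_spectrum (p : ℕ) (hp : p.Prime) (hodd : Odd p)
    (V : Matrix (Fin p) (Fin p) ℂ) (hV : V ∈ Matrix.unitaryGroup (Fin p) ℂ)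
    (hVpow : V ^ (p + 1) = 1)
    (htr : ∀ n : ℕ, 1 ≤ n → n ≤ p → ‖Matrix.trace (V ^ n)‖ = 1) :
    ∃ f : Fin p → ℂ, Function.Injective f ∧
      (∀ i, f i ^ (p + 1) = 1) ∧
      (∀ i, Module.End.HasEigenvalue (Matrix.toLin' V) (f i)) ∧
      (∀ μ : ℂ, Module.End.HasEigenvalue (Matrix.toLin' V) μ → μ ∈ Set.range f) ∧
      (∀ i, Module.finrank ℂ (Module.End.eigenspace (Matrix.toLin' V) (f i)) = 1) := by
  classical
  set N := p + 1 with hNdef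
  have hN0 : N ≠ 0 := Nat.succ_ne_zero p
  haveI : NeZero N := ⟨hN0⟩
  set f := Matrix.toLin' V with hfdef
  have hf1 : f ^ N = 1 := by
    rw [hfdef, aux_toLin'_pow, hVpow, Matrix.toLin'_one]; rfl
  set ω : ℂ := Complex.exp (2 * Real.pi * Complex.I / N) with hωdef
  have hω : IsPrimitiveRoot ω N := Complex.isPrimitiveRoot_exp N hN0
  have hωN : ω ^ N = 1 := hω.pow_eq_one
  set m : Fin N → ℕ := fun k => finrank ℂ (Module.End.eigenspace f (ω ^ (k : ℕ))) with hmdef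
  -- trace formula
  have htrf : ∀ n : ℕ, Matrix.trace (V ^ n) = ∑ j : Fin N, (ω ^ (j : ℕ)) ^ n * (m j : ℂ) := by
    intro n
    rw [← aux_trace_toLin' (V ^ n), ← aux_toLin'_pow]
    exact aux_trace_formula f hN0 hω hf1 n
  have htrconj : ∀ n : ℕ, (starRingEnd ℂ) (Matrix.trace (V ^ n)) =
      ∑ k : Fin N, (((starRingEnd ℂ) ω) ^ (k : ℕ)) ^ n * (m k : ℂ) := by
    intro n
    rw [htrf n, map_sum]
    refine Finset.sum_congr rfl fun k _ => ?_
    rw [_root_.map_mul, map_pow, map_pow, Complex.conj_natCast]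
  -- the key sum
  have hS : ∑ n ∈ Finset.range N,
      (Matrix.trace (V ^ n) * (starRingEnd ℂ) (Matrix.trace (V ^ n))) =
      (N : ℂ) * ∑ j : Fin N, (m j : ℂ) ^ 2 := by
    rw [← aux_big_sum hN0 hω m]
    exact Finset.sum_congr rfl fun n _ => by rw [htrconj n, htrf n]
  have hS2 : ∑ n ∈ Finset.range N,
      (Matrix.trace (V ^ n) * (starRingEnd ℂ) (Matrix.trace (V ^ n))) =
      (p : ℂ) ^ 2 + (p : ℂ) := by
    rw [hNdef, Finset.sum_range_succ']
    have h0 : Matrix.trace (V ^ 0) = (p : ℂ) := by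
      rw [pow_zero, Matrix.trace_one]
      simp
    have hrest : ∀ i ∈ Finset.range p,
        Matrix.trace (V ^ (i + 1)) * (starRingEnd ℂ) (Matrix.trace (V ^ (i + 1))) = 1 := by
      intro i hi
      rw [Finset.mem_range] at hi
      have habs := htr (i + 1) (Nat.succ_le_succ (Nat.zero_le i)) (Nat.succ_le_of_lt hi)
      rw [Complex.mul_conj]
      rw [← Complex.sq_norm, habs]
      norm_num
    rw [Finset.sum_congr rfl hrest, Finset.sum_const, h0]
    simp [Complex.conj_natCast]
    ring
  -- ∑ m² = p
  have hsum_sq : ∑ j : Fin N, m j ^ 2 = p := by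
    have hNc : (N : ℂ) ≠ 0 := Nat.cast_ne_zero.mpr hN0
    have : (N : ℂ) * ∑ j : Fin N, (m j : ℂ) ^ 2 = (N : ℂ) * (p : ℂ) := by
      rw [← hS, hS2, hNdef]
      push_cast
      ring
    have h2 : ∑ j : Fin N, ((m j : ℂ)) ^ 2 = (p : ℂ) := mul_left_cancel₀ hNc this
    have h3 : ((∑ j : Fin N, m j ^ 2 : ℕ) : ℂ) = ((p : ℕ) : ℂ) := by
      push_cast
      exact h2
    exact_mod_cast h3
  have hsum : ∑ j : Fin N, m j = p := aux_finrank_sum f hN0 hω hf1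
  -- each m j ∈ {0, 1}
  have hm01 : ∀ k, m k ^ 2 = m k := by
    intro k
    by_contra h
    have hle : ∀ j : Fin N, m j ≤ m j ^ 2 := fun j => Nat.le_self_pow two_ne_zero _
    have hlt : m k < m k ^ 2 := lt_of_le_of_ne (hle k) (Ne.symm h)
    have : ∑ j : Fin N, m j < ∑ j : Fin N, m j ^ 2 :=
      Finset.sum_lt_sum (fun j _ => hle j) ⟨k, Finset.mem_univ k, hlt⟩
    rw [hsum, hsum_sq] at this
    exact lt_irrefl p this
  have hm01' : ∀ k, m k = 0 ∨ m k = 1 := by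
    intro k
    rcases Nat.eq_zero_or_pos (m k) with h | h
    · exact Or.inl h
    · right
      have := hm01 k
      rw [pow_two] at this
      nlinarith [this, h]
  -- the set of indices with multiplicity 1
  set T : Finset (Fin N) := Finset.univ.filter (fun k => m k = 1) with hTdef
  have hTcard : T.card = p := by
    have h1 : ∑ k ∈ T, m k + ∑ k ∈ Finset.univ.filter (fun k => ¬ (m k = 1)), m k = p := by
      rw [Finset.sum_filter_add_sum_filter_not, hsum]
    have h2 : ∑ k ∈ T, m k = T.card := by
      rw [Finset.sum_congr rfl (fun k hk => (Finset.mem_filter.mp hk).2), Finset.sum_const,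
        smul_eq_mul, mul_one]
    have h3 : ∑ k ∈ Finset.univ.filter (fun k => ¬ (m k = 1)), m k = 0 := by
      refine Finset.sum_eq_zero fun k hk => ?_
      rcases hm01' k with h | h
      · exact h
      · exact absurd h (Finset.mem_filter.mp hk).2
    omega
  set e := T.orderIsoOfFin hTcard with hedef
  refine ⟨fun i => ω ^ (((e i : Fin N)) : ℕ), ?_, ?_, ?_, ?_, ?_⟩
  · -- injective
    intro i j hij
    have h1 : (e i : Fin N) = (e j : Fin N) :=
      Fin.ext (hω.pow_inj (e i : Fin N).isLt (e j : Fin N).isLt hij)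
    exact e.injective (Subtype.ext h1)
  · -- roots of unity
    intro i
    rw [← pow_mul, mul_comm, pow_mul, hωN, one_pow]
  · -- has eigenvalue
    intro i
    have hm1 : m (e i : Fin N) = 1 := (Finset.mem_filter.mp (e i).2).2
    rw [Module.End.hasEigenvalue_iff]
    intro hbot
    have : m (e i : Fin N) = 0 := by
      rw [hmdef]
      simp only
      rw [Submodule.finrank_eq_zero.mpr hbot]  -- hbot : eigenspace = ⊥
    omega
  · -- all eigenvalues
    intro μ0 hev
    have hpow : Module.End.HasEigenvalue (f ^ N) (μ0 ^ N) := Module.End.HasEigenvalue.pow hev N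
    rw [hf1] at hpow
    obtain ⟨v, hv⟩ := hpow.exists_hasEigenvector
    have hv1 : v = μ0 ^ N • v := by
      have := Module.End.mem_eigenspace_iff.mp hv.1
      simpa using this
    have hμN : μ0 ^ N = 1 := by
      by_contra h
      have h0 : (μ0 ^ N - 1) • v = 0 := by
        rw [sub_smul, one_smul, ← hv1, sub_self]
      rcases smul_eq_zero.mp h0 with h' | h'
      · exact h (by linear_combination h')
      · exact hv.2 h'
    obtain ⟨k, hk, hkμ⟩ := hω.eq_pow_of_pow_eq_one hμN
    have hm1 : m ⟨k, hk⟩ = 1 := by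
      rcases hm01' ⟨k, hk⟩ with h | h
      · exfalso
        have hbot : Module.End.eigenspace f (ω ^ k) = ⊥ := by
          have := h
          rw [hmdef] at this
          simpa using Submodule.finrank_eq_zero.mp this
        rw [hkμ] at hbot
        exact Module.End.hasEigenvalue_iff.mp hev hbot
      · exact h
    have hkT : (⟨k, hk⟩ : Fin N) ∈ T := Finset.mem_filter.mpr ⟨Finset.mem_univ _, hm1⟩
    refine ⟨e.symm ⟨⟨k, hk⟩, hkT⟩, ?_⟩
    simp only [OrderIso.apply_symm_apply]
    exact hkμ
  · -- finrank 1
    intro i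
    exact (Finset.mem_filter.mp (e i).2).2
end
end

section
/- Let ω = e^{2πi/3}, let Z be the diagonal 3×3 unitary with Z e_r = ω^r e_r and X the cyclic shift with X e_r = e_{r+1 (mod 3)}, for t ∈ ℝ let ψ = ψ_f(t) = (0, 1, −e^{it})/√2 ∈ ℂ³, and for a unit vector φ write ρ_φ = |φ⟩⟨φ| for the orthogonal projection onto ℂφ. Then tr(ρ_ψ ρ_{Zψ} ρ_{Z²ψ}) = −1/8 and tr(ρ_ψ ρ_{Xψ} ρ_{X²ψ}) = −e^{−3it}/8. In particular the geometric phase |arg tr(ρ_ψ ρ_{Zψ} ρ_{Z²ψ})| equals π, and for t ∈ [0, π/3] the geometric phase |arg tr(ρ_ψ ρ_{Xψ} ρ_{X²ψ})| equals π − 3t. -/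
noncomputable section

open Complex Matrix

/-- The rank-one projection `|φ⟩⟨φ|` onto the line of a unit vector `φ`. -/
def proj (φ : Fin 3 → ℂ) : Matrix (Fin 3) (Fin 3) ℂ :=
  Matrix.vecMulVec φ fun i => (starRingEnd ℂ) (φ i)

/-- The Bargmann triple product `tr(ρ_ψ ρ_{Zψ} ρ_{Z²ψ})` for `ψ = ψ_f(t)`. -/
def triZ (t : ℝ) : ℂ :=
  Matrix.trace (proj (ψf t) * proj ((Zmat 3).mulVec (ψf t)) *
    proj (((Zmat 3) ^ 2).mulVec (ψf t)))

/-- The Bargmann triple product `tr(ρ_ψ ρ_{Xψ} ρ_{X²ψ})` for `ψ = ψ_f(t)`. -/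
def triX (t : ℝ) : ℂ :=
  Matrix.trace (proj (ψf t) * proj ((Xmat 3).mulVec (ψf t)) *
    proj (((Xmat 3) ^ 2).mulVec (ψf t)))


namespace Dim3Aux

lemma trace_proj3 (a b c : Fin 3 → ℂ) :
    Matrix.trace (proj a * proj b * proj c) = inn a b * inn b c * inn c a := by
  simp only [Matrix.trace, Matrix.diag, Matrix.mul_apply, proj, Matrix.vecMulVec_apply, inn,
    Fin.sum_univ_three]
  ring

lemma hom : Complex.exp (2 * (Real.pi:ℂ) * Complex.I / 3) ^ 3 = 1 := by
  rw [← Complex.exp_nat_mul]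
  rw [show (3:ℕ) * (2 * (Real.pi:ℂ) * Complex.I / 3) = 2 * Real.pi * Complex.I by push_cast; ring]
  exact Complex.exp_two_pi_mul_I

lemma homne : Complex.exp (2 * (Real.pi:ℂ) * Complex.I / 3) ≠ 1 := by
  intro h
  rw [Complex.exp_eq_one_iff] at h
  obtain ⟨n, hn⟩ := h
  have hπ : (Real.pi:ℂ) ≠ 0 := by exact_mod_cast Real.pi_ne_zero
  have hI : (2 * (Real.pi:ℂ) * Complex.I) ≠ 0 := by
    simp [hπ, Complex.I_ne_zero, Real.pi_ne_zero]
  have h3 : ((3 * n : ℤ) : ℂ) = ((1:ℤ):ℂ) := by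
    apply mul_right_cancel₀ hI
    push_cast
    field_simp at hn
    linear_combination -(2 * (Real.pi:ℂ) * Complex.I) * hn
  have := Int.cast_injective (α := ℂ) h3
  omega

lemma hsum : Complex.exp (2 * (Real.pi:ℂ) * Complex.I / 3) ^ 2
    + Complex.exp (2 * (Real.pi:ℂ) * Complex.I / 3) + 1 = 0 := by
  have h := hom
  have h2 := homne
  have key : (Complex.exp (2 * (Real.pi:ℂ) * Complex.I / 3) - 1) *
      (Complex.exp (2 * (Real.pi:ℂ) * Complex.I / 3) ^ 2
        + Complex.exp (2 * (Real.pi:ℂ) * Complex.I / 3) + 1) = 0 := by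
    linear_combination h
  rcases mul_eq_zero.1 key with h' | h'
  · exact absurd (by linear_combination h') h2
  · exact h'

lemma hom2 : Complex.exp (2 * (Real.pi:ℂ) * Complex.I * 2 / 3)
    = Complex.exp (2 * (Real.pi:ℂ) * Complex.I / 3) ^ 2 := by
  rw [show (2 * (Real.pi:ℂ) * Complex.I * 2 / 3) = ((2:ℕ):ℂ) * (2 * (Real.pi:ℂ) * Complex.I / 3) by push_cast; ring,
    Complex.exp_nat_mul]

lemma hs2c : ((Real.sqrt 2:ℝ):ℂ) ^ 2 = 2 := by
  rw [← Complex.ofReal_pow, Real.sq_sqrt (by norm_num)]; norm_num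

lemma hsne : ((Real.sqrt 2:ℝ):ℂ) ≠ 0 := by
  simp [Real.sqrt_eq_zero']

lemma hstar_om : (starRingEnd ℂ) (Complex.exp (2 * (Real.pi:ℂ) * Complex.I / 3))
    = Complex.exp (2 * (Real.pi:ℂ) * Complex.I / 3) ^ 2 := by
  rw [← Complex.exp_conj]
  have h1 : (starRingEnd ℂ) (2 * (Real.pi:ℂ) * Complex.I / 3) = -(2 * (Real.pi:ℂ) * Complex.I / 3) := by
    simp [Complex.conj_ofReal, map_div₀, map_ofNat]
    ring
  rw [h1, show (-(2 * (Real.pi:ℂ) * Complex.I / 3)) =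
      (2*(Real.pi:ℂ)*Complex.I/3) + ((2*(Real.pi:ℂ)*Complex.I/3) + -(2*Real.pi*Complex.I)) by ring,
    Complex.exp_add, Complex.exp_add, Complex.exp_neg, Complex.exp_two_pi_mul_I]
  ring

lemma hstar_e (t : ℝ) : (starRingEnd ℂ) (Complex.exp (Complex.I * t)) = Complex.exp (-(Complex.I * t)) := by
  rw [← Complex.exp_conj]
  congr 1
  simp [Complex.conj_ofReal]

lemma he_mul (t : ℝ) : Complex.exp (Complex.I * t) * Complex.exp (-(Complex.I * t)) = 1 := by
  rw [← Complex.exp_add]; simp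

lemma hstar_om2 : (starRingEnd ℂ) (Complex.exp (2 * (Real.pi:ℂ) * Complex.I * 2 / 3))
    = Complex.exp (2 * (Real.pi:ℂ) * Complex.I / 3) := by
  rw [hom2, map_pow, hstar_om]
  linear_combination Complex.exp (2 * (Real.pi:ℂ) * Complex.I / 3) * hom

lemma iZ1 (t : ℝ) : inn (ψf t) ((Zmat 3).mulVec (ψf t)) = -(1/2) := by
  simp only [inn, ψf, Zmat, Matrix.mulVec, dotProduct, Matrix.diagonal, Matrix.of_apply,
    Fin.sum_univ_three, Matrix.cons_val_zero, Matrix.cons_val_one, Matrix.head_cons,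
    Matrix.cons_val_two, Matrix.tail_cons, map_div₀, _root_.map_one, map_neg, Complex.conj_ofReal]
  norm_num [Fin.ext_iff, show ((3:Fin 3):ℕ) = 0 from rfl]
  rw [hstar_e, hom2]
  have h2 := hs2c
  have hne := hsne
  have hsum' := hsum
  have he := he_mul t
  field_simp
  linear_combination 2 * hsum' + 2 * (Complex.exp (2 * (Real.pi:ℂ) * Complex.I / 3))^2 * he + h2

lemma iZ2 (t : ℝ) : inn ((Zmat 3).mulVec (ψf t)) (((Zmat 3)^2).mulVec (ψf t)) = -(1/2) := by
  simp only [inn, ψf, Zmat, pow_two, Matrix.mul_apply, Matrix.mulVec,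
    dotProduct, Matrix.diagonal, Matrix.of_apply, Fin.sum_univ_three,
    Matrix.cons_val_zero, Matrix.cons_val_one, Matrix.head_cons, Matrix.cons_val_two,
    Matrix.tail_cons, map_div₀, _root_.map_one, map_neg, _root_.map_mul, Complex.conj_ofReal]
  norm_num [Fin.ext_iff, show ((3:Fin 3):ℕ) = 0 from rfl]
  simp only [map_pow, hstar_e, hstar_om, hstar_om2, hom2]
  have h2 := hs2c
  have hne := hsne
  have hsum' := hsum
  have h3 := hom
  have he := he_mul t
  field_simp
  linear_combination (2*(Complex.exp (2 * (Real.pi:ℂ) * Complex.I / 3))^2 + 2*(Complex.exp (2 * (Real.pi:ℂ) * Complex.I / 3))^8 - 2*(Complex.exp (2 * (Real.pi:ℂ) * Complex.I / 3))^2)*he + (2*(Complex.exp (2 * (Real.pi:ℂ) * Complex.I / 3)) + 2*(Complex.exp (2 * (Real.pi:ℂ) * Complex.I / 3))^2 + 2*(Complex.exp (2 * (Real.pi:ℂ) * Complex.I / 3))^5)*h3 + h2 + 2*hsum'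

lemma iZ3 (t : ℝ) : inn (((Zmat 3)^2).mulVec (ψf t)) (ψf t) = -(1/2) := by
  simp only [inn, ψf, Zmat, pow_two, Matrix.mul_apply, Matrix.mulVec,
    dotProduct, Matrix.diagonal, Matrix.of_apply, Fin.sum_univ_three,
    Matrix.cons_val_zero, Matrix.cons_val_one, Matrix.head_cons, Matrix.cons_val_two,
    Matrix.tail_cons, map_div₀, _root_.map_one, map_neg, _root_.map_mul, Complex.conj_ofReal]
  norm_num [Fin.ext_iff, show ((3:Fin 3):ℕ) = 0 from rfl]
  simp only [map_pow, hstar_e, hstar_om, hstar_om2, hom2]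
  have h2 := hs2c
  have hne := hsne
  have hsum' := hsum
  have h3 := hom
  have he := he_mul t
  field_simp
  linear_combination 2*(Complex.exp (2 * (Real.pi:ℂ) * Complex.I / 3))^8*he + h2 + (2*(Complex.exp (2 * (Real.pi:ℂ) * Complex.I / 3)) + 2*(Complex.exp (2 * (Real.pi:ℂ) * Complex.I / 3))^2*((Complex.exp (2 * (Real.pi:ℂ) * Complex.I / 3))^3+1))*h3 + 2*hsum'

lemma iX1 (t : ℝ) : inn (ψf t) ((Xmat 3).mulVec (ψf t)) = -Complex.exp (-(Complex.I*t))/2 := by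
  simp only [inn, ψf, Xmat, Matrix.mulVec, dotProduct, Matrix.of_apply,
    Fin.sum_univ_three, Matrix.cons_val_zero, Matrix.cons_val_one, Matrix.head_cons,
    Matrix.cons_val_two, Matrix.tail_cons, map_div₀, _root_.map_one, map_neg, Complex.conj_ofReal]
  norm_num [Fin.ext_iff, show ((3:Fin 3):ℕ) = 0 from rfl, show ((1+1:Fin 3):ℕ) = 2 from rfl,
    show ((2+1:Fin 3):ℕ) = 0 from rfl]
  rw [hstar_e]
  have h2 := hs2c
  have hne := hsne
  have he := he_mul t
  field_simp
  linear_combination h2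

lemma iX2 (t : ℝ) : inn ((Xmat 3).mulVec (ψf t)) (((Xmat 3)^2).mulVec (ψf t)) = -Complex.exp (-(Complex.I*t))/2 := by
  simp only [inn, ψf, Xmat, pow_two, Matrix.mul_apply, Matrix.mulVec, dotProduct,
    Matrix.of_apply, Fin.sum_univ_three, Matrix.cons_val_zero, Matrix.cons_val_one,
    Matrix.head_cons, Matrix.cons_val_two, Matrix.tail_cons, map_div₀, _root_.map_one,
    map_neg, Complex.conj_ofReal]
  norm_num [Fin.ext_iff, show ((3:Fin 3):ℕ) = 0 from rfl, show ((1+1:Fin 3):ℕ) = 2 from rfl,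
    show ((2+1:Fin 3):ℕ) = 0 from rfl]
  rw [hstar_e]
  have h2 := hs2c
  have hne := hsne
  have he := he_mul t
  field_simp
  linear_combination h2

lemma iX3 (t : ℝ) : inn (((Xmat 3)^2).mulVec (ψf t)) (ψf t) = -Complex.exp (-(Complex.I*t))/2 := by
  simp only [inn, ψf, Xmat, pow_two, Matrix.mul_apply, Matrix.mulVec, dotProduct,
    Matrix.of_apply, Fin.sum_univ_three, Matrix.cons_val_zero, Matrix.cons_val_one,
    Matrix.head_cons, Matrix.cons_val_two, Matrix.tail_cons, map_div₀, _root_.map_one,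
    map_neg, Complex.conj_ofReal]
  norm_num [Fin.ext_iff, show ((3:Fin 3):ℕ) = 0 from rfl, show ((1+1:Fin 3):ℕ) = 2 from rfl,
    show ((2+1:Fin 3):ℕ) = 0 from rfl]
  rw [hstar_e]
  have h2 := hs2c
  have hne := hsne
  have he := he_mul t
  field_simp
  linear_combination h2

end Dim3Aux

/-- For `ψ = ψ_f(t)`: `tr(ρ_ψ ρ_{Zψ} ρ_{Z²ψ}) = −1/8` and
`tr(ρ_ψ ρ_{Xψ} ρ_{X²ψ}) = −e^{−3it}/8`; in particular the geometric phase of the first triple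
is `π`, and for `t ∈ [0, π/3]` that of the second is `π − 3t`. -/
theorem dim3_geometric_phases (t : ℝ) :
    triZ t = -(1 / 8) ∧
    triX t = -Complex.exp (-(3 : ℂ) * Complex.I * (t : ℂ)) / 8 ∧
    |(triZ t).arg| = Real.pi ∧
    (t ∈ Set.Icc (0 : ℝ) (Real.pi / 3) → |(triX t).arg| = Real.pi - 3 * t) := by
  have hZ : triZ t = -(1 / 8) := by
    rw [triZ, Dim3Aux.trace_proj3, Dim3Aux.iZ1, Dim3Aux.iZ2, Dim3Aux.iZ3]
    norm_num
  have hX : triX t = -Complex.exp (-(3 : ℂ) * Complex.I * (t : ℂ)) / 8 := by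
    rw [triX, Dim3Aux.trace_proj3, Dim3Aux.iX1, Dim3Aux.iX2, Dim3Aux.iX3]
    rw [show (-(3:ℂ) * Complex.I * (t:ℂ)) = ((3:ℕ):ℂ) * (-(Complex.I * (t:ℂ))) by push_cast; ring,
      Complex.exp_nat_mul]
    ring
  refine ⟨hZ, hX, ?_, ?_⟩
  · rw [hZ, show (-(1/8) : ℂ) = ((-(1/8):ℝ):ℂ) by norm_num,
      Complex.arg_ofReal_of_neg (by norm_num)]
    exact abs_of_pos Real.pi_pos
  · rintro ⟨ht0, ht1⟩
    have hrepr : triX t = ((1/8:ℝ):ℂ) *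
        (Complex.cos ((Real.pi - 3*t : ℝ):ℂ) + Complex.sin ((Real.pi - 3*t : ℝ):ℂ) * Complex.I) := by
      rw [hX, ← Complex.exp_mul_I,
        show (((Real.pi - 3*t : ℝ):ℂ) * Complex.I) = (Real.pi:ℂ) * Complex.I + (-(3:ℂ) * Complex.I * (t:ℂ)) by push_cast; ring,
        Complex.exp_add, Complex.exp_pi_mul_I]
      push_cast
      ring
    rw [hrepr, Complex.arg_real_mul _ (by norm_num : (0:ℝ) < 1/8)]
    rw [Complex.arg_cos_add_sin_mul_I (θ := Real.pi - 3*t) ⟨by nlinarith [Real.pi_pos], by linarith⟩]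
    exact abs_of_nonneg (by linarith)
end
end

section
/- Let ω = e^{2πi/3}, let Z be the diagonal 3×3 unitary with Z e_r = ω^r e_r and X the cyclic shift with X e_r = e_{r+1 (mod 3)}, and for t ∈ ℝ let ψ_f(t) = (0, 1, −e^{it})/√2 ∈ ℂ³. Then for any t_0, t_1, t_2 ∈ ℝ, the nine vectors Z^b X^a ψ_f(t_a), a, b ∈ {0,1,2}, form a SIC POVM in ℂ³: each is a unit vector and any two of them indexed by distinct pairs (a,b) ≠ (a',b') have squared overlap |⟨Z^b X^a ψ_f(t_a), Z^{b'} X^{a'} ψ_f(t_{a'})⟩|² = 1/4. -/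
noncomputable section

open Complex Matrix

def ω : ℂ := Complex.exp (2 * Real.pi * Complex.I / 3)
lemma hprim : IsPrimitiveRoot ω 3 := by
  have := Complex.isPrimitiveRoot_exp 3 (by norm_num); simpa [ω] using this
lemma ω3 : ω ^ 3 = 1 := hprim.pow_eq_one
lemma absω : ‖ω‖ = 1 := by simp [ω, Complex.norm_exp]
lemma conjω : (starRingEnd ℂ) ω = ω ^ 2 := by
  have h : ω * ω ^ 2 = 1 := by rw [← pow_succ']; exact ω3
  have h2 : (starRingEnd ℂ) ω * ω = 1 := by
    rw [Complex.conj_mul']; norm_cast; simp [absω]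
  calc (starRingEnd ℂ) ω = (starRingEnd ℂ) ω * (ω * ω ^ 2) := by rw [h, mul_one]
    _ = ((starRingEnd ℂ) ω * ω) * ω ^ 2 := by ring
    _ = ω ^ 2 := by rw [h2, one_mul]
lemma ωp (n : ℕ) : ω ^ (n + 3) = ω ^ n := by rw [pow_add, ω3, mul_one]
lemma ω4 : ω ^ 4 = ω := by simpa using ωp 1
lemma ω5 : ω ^ 5 = ω ^ 2 := by simpa using ωp 2
lemma ω6 : ω ^ 6 = 1 := by have := ωp 3; rw [this, ω3]
lemma ω7 : ω ^ 7 = ω := by have := ωp 4; rw [this, ω4]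
lemma ω8 : ω ^ 8 = ω ^ 2 := by have := ωp 5; rw [this, ω5]
lemma ωre : ω.re = -(1/2) := by
  have : ω = Complex.exp ((2*Real.pi/3 : ℝ) * Complex.I) := by
    rw [ω]; norm_num; ring_nf
  rw [this, Complex.exp_ofReal_mul_I_re]
  rw [show 2*Real.pi/3 = Real.pi - Real.pi/3 by ring, Real.cos_pi_sub, Real.cos_pi_div_three]
lemma ωim : ω.im = Real.sqrt 3 / 2 := by
  have : ω = Complex.exp ((2*Real.pi/3 : ℝ) * Complex.I) := by
    rw [ω]; norm_num; ring_nf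
  rw [this, Complex.exp_ofReal_mul_I_im]
  rw [show 2*Real.pi/3 = Real.pi - Real.pi/3 by ring, Real.sin_pi_sub, Real.sin_pi_div_three]
lemma ω2re : (ω^2).re = -(1/2) := by rw [← conjω, Complex.conj_re, ωre]
lemma ω2im : (ω^2).im = -(Real.sqrt 3 / 2) := by rw [← conjω, Complex.conj_im, ωim]
lemma Ere (t : ℝ) : (Complex.exp (Complex.I * t)).re = Real.cos t := by
  rw [mul_comm, Complex.exp_ofReal_mul_I_re]
lemma Eim (t : ℝ) : (Complex.exp (Complex.I * t)).im = Real.sin t := by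
  rw [mul_comm, Complex.exp_ofReal_mul_I_im]
lemma absE (t : ℝ) : ‖Complex.exp (Complex.I * t)‖ = 1 := by
  simp [Complex.norm_exp]

lemma X_mulVec (v : Fin 3 → ℂ) (r : Fin 3) : (Xmat 3).mulVec v r = v (r - 1) := by
  fin_cases r <;>
    simp [Xmat, Matrix.mulVec, dotProduct, Fin.sum_univ_three, show ((2:Fin 3) - 1) = 1 by decide,
      show ((0:Fin 3) - 1) = 2 by decide, show ((1:Fin 3) - 1) = 0 by decide]
open Fin.NatCast Fin.CommRing in
lemma Xpow_mulVec (n : ℕ) (v : Fin 3 → ℂ) (r : Fin 3) :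
    ((Xmat 3) ^ n).mulVec v r = v (r - n) := by
  induction n generalizing v r with
  | zero => simp
  | succ n ih =>
      rw [pow_succ, ← Matrix.mulVec_mulVec, ih, X_mulVec]
      congr 1; push_cast; ring
lemma Z_eq : Zmat 3 = Matrix.diagonal fun r : Fin 3 => ω ^ (r : ℕ) := by
  ext r s
  rcases eq_or_ne r s with h | h
  · subst h; simp [Zmat, Matrix.diagonal, ω, ← Complex.exp_nat_mul]; ring_nf
  · simp [Zmat, Matrix.diagonal_apply_ne _ h]
lemma Zpow_mulVec (n : ℕ) (v : Fin 3 → ℂ) (r : Fin 3) :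
    ((Zmat 3) ^ n).mulVec v r = ω ^ (n * (r : ℕ)) * v r := by
  rw [Z_eq, Matrix.diagonal_pow, Matrix.mulVec_diagonal, Pi.pow_apply, ← pow_mul, mul_comm (r:ℕ)]
lemma sicVec_apply (t : ℝ) (a b r : Fin 3) :
    sicVec t a b r = ω ^ ((b : ℕ) * (r : ℕ)) * ψf t (r - a) := by
  rw [sicVec, ← Matrix.mulVec_mulVec, Zpow_mulVec, Xpow_mulVec, Fin.cast_val_eq_self]


lemma fs1 : (-1 : Fin 3) = 2 := by decide
lemma fs2 : (-2 : Fin 3) = 1 := by decide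
lemma fs3 : (1 : Fin 3) - 2 = 2 := by decide
lemma fs4 : (2 : Fin 3) - 1 = 1 := by decide
lemma fs5 : (1 : Fin 3) - 1 = 0 := by decide
lemma fs6 : (2 : Fin 3) - 2 = 0 := by decide
lemma r2 : Real.sqrt 2 ^ 2 = 2 := Real.sq_sqrt (by norm_num)
lemma r24 : Real.sqrt 2 ^ 4 = 4 := by rw [show 4 = 2*2 from rfl, pow_mul, r2]; norm_num
lemma r3 : Real.sqrt 3 ^ 2 = 3 := Real.sq_sqrt (by norm_num)
lemma r34 : Real.sqrt 3 ^ 4 = 9 := by rw [show 4 = 2*2 from rfl, pow_mul, r3]; norm_num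
lemma sin4 (x : ℝ) : Real.sin x ^ 4 = (1 - Real.cos x ^ 2) ^ 2 := by
  rw [show 4 = 2*2 from rfl, pow_mul, Real.sin_sq]


set_option maxHeartbeats 4000000 in
/-- (Regrouping.) For any parameters `t_0, t_1, t_2`, the nine vectors
`Z^b X^a ψ_f(t_a)`, `a, b ∈ {0,1,2}`, form a SIC POVM in `ℂ³`. -/
theorem dim3_regrouped_family_is_SIC (t : Fin 3 → ℝ) :
    (∀ a b : Fin 3, inn (sicVec (t a) a b) (sicVec (t a) a b) = 1) ∧
    (∀ a b a' b' : Fin 3, (a, b) ≠ (a', b') →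
      ‖inn (sicVec (t a) a b) (sicVec (t a') a' b')‖ ^ 2 = 1 / 4) := by
  constructor
  · intro a b
    fin_cases a <;> fin_cases b <;>
      (simp [inn, Fin.sum_univ_three, sicVec_apply, ψf, map_pow, conjω, ← pow_mul,
        ω4, ω5, ω6, ω7, ω8, fs1, fs2, fs3, fs4, fs5, fs6, Complex.ext_iff, ωre, ωim, ω2re, ω2im,
        Ere, Eim, Complex.div_re, Complex.div_im, Complex.normSq_apply]
       ring_nf
       simp only [Real.sin_sq, sin4, r2, r24, r3, r34]
       try norm_num
       try ring_nf)
  · intro a b a' b' h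
    fin_cases a <;> fin_cases b <;> fin_cases a' <;> fin_cases b' <;>
      first
      | exact absurd rfl h
      | (rw [Complex.sq_norm]
         simp [inn, Fin.sum_univ_three, sicVec_apply, ψf, map_pow, conjω, ← pow_mul,
           ω4, ω5, ω6, ω7, ω8, fs1, fs2, fs3, fs4, fs5, fs6, Complex.normSq_apply, ωre, ωim,
           ω2re, ω2im, Ere, Eim, Complex.div_re, Complex.div_im, Complex.add_re]
         ring_nf
         try simp only [Real.sin_sq, sin4, r2, r24, r3, r34]
         try norm_num
         try ring_nf)
end
end
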